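/- Two pairs (c₁,d₁) and (c₂,d₂) in (ℤ/Nℤ)² with gcd(c₁,d₁,N)=1 and gcd(c₂,d₂,N)=1 represent the same element of P¹(ℤ/Nℤ) (i.e., there exists a unit λ ∈ (ℤ/Nℤ)* with (c₂,d₂)=(λc₁,λd₁)) if and only if c₁d₂ ≡ c₂d₁ (mod N). -/
import Mathlib


/-- Two pairs `(c₁,d₁)` and `(c₂,d₂)` in `(ℤ/Nℤ)²`, each with `gcd(cᵢ,dᵢ,N)=1`
(equivalently, `cᵢ` and `dᵢ` generate the unit ideal of `ℤ/Nℤ`), represent the same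
element of `P¹(ℤ/Nℤ)` (i.e. differ by a unit `λ ∈ (ℤ/Nℤ)ˣ`) if and only if
`c₁d₂ ≡ c₂d₁ (mod N)`. -/
theorem p1_eq_iff (N : ℕ) (c₁ d₁ c₂ d₂ : ZMod N)
    (h₁ : IsCoprime c₁ d₁) (h₂ : IsCoprime c₂ d₂) :
    (∃ l : (ZMod N)ˣ, c₂ = (l : ZMod N) * c₁ ∧ d₂ = (l : ZMod N) * d₁) ↔
      c₁ * d₂ = c₂ * d₁ := by
  constructor
  · rintro ⟨l, rfl, rfl⟩
    ring
  · intro h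
    obtain ⟨a, b, hab⟩ := h₁
    obtain ⟨a', b', hab'⟩ := h₂
    have hlm : (a * c₂ + b * d₂) * (a' * c₁ + b' * d₁) = 1 := by
      have : (a * c₂ + b * d₂) * (a' * c₁ + b' * d₁)
          = (a * c₁ + b * d₁) * (a' * c₂ + b' * d₂)
            + (a * b' - a' * b) * (c₂ * d₁ - c₁ * d₂) := by ring
      rw [this, h, hab, hab']
      ring
    refine ⟨⟨a * c₂ + b * d₂, a' * c₁ + b' * d₁, hlm, by rw [mul_comm] at hlm; exact hlm⟩,
      ?_, ?_⟩
    · show c₂ = (a * c₂ + b * d₂) * c₁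
      calc c₂ = c₂ * (a * c₁ + b * d₁) := by rw [hab, mul_one]
        _ = a * c₂ * c₁ + b * (c₂ * d₁) := by ring
        _ = a * c₂ * c₁ + b * (c₁ * d₂) := by rw [h]
        _ = (a * c₂ + b * d₂) * c₁ := by ring
    · show d₂ = (a * c₂ + b * d₂) * d₁
      calc d₂ = d₂ * (a * c₁ + b * d₁) := by rw [hab, mul_one]
        _ = a * (c₁ * d₂) + b * d₂ * d₁ := by ring
        _ = a * (c₂ * d₁) + b * d₂ * d₁ := by rw [h]
        _ = (a * c₂ + b * d₂) * d₁ := by ring
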